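/- Let P₀, P₁, P₂ ∈ ℂ be non-collinear points, let B ∈ ℂ, and let g be a direct isometry of the plane such that |g(P k) − B| = |P k − B| for k = 0, 1, 2. Then g(B) = B, i.e. g is a rotation about B. -/

import Mathlib

/-- A direct isometry of the plane preserving the distances of three non-collinear
points from an anchor `B` must fix `B`, i.e. it is a rotation about `B`. -/
theorem three_noncollinear_measurements_rotation_about_anchor
    (P0 P1 P2 B : ℂ) (hnc : ¬ Collinear ℝ ({P0, P1, P2} : Set ℂ))
    (g : ℂ → ℂ) (hg : ∃ a b : ℂ, ‖a‖ = 1 ∧ g = fun z => a * z + b)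
    (h0 : ‖g P0 - B‖ = ‖P0 - B‖)
    (h1 : ‖g P1 - B‖ = ‖P1 - B‖)
    (h2 : ‖g P2 - B‖ = ‖P2 - B‖) :
    g B = B := by
  obtain ⟨a, b, ha, rfl⟩ := hg
  have ha0 : a ≠ 0 := by
    intro h; rw [h] at ha; simp at ha
  set B' : ℂ := (B - b) / a with hB'
  -- each measurement point is equidistant from B and B'
  have key : ∀ P : ℂ, ‖a * P + b - B‖ = ‖P - B‖ →
      dist P B = dist P B' := by
    intro P hP
    have : a * P + b - B = a * (P - B') := by
      rw [hB']; field_simp; ring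
    rw [this, norm_mul, ha, one_mul] at hP
    simpa [Complex.dist_eq] using hP.symm
  by_cases hBB : B = B'
  · -- then a*B + b = B
    have : B * a = B - b := by
      rw [hB'] at hBB; field_simp at hBB
      linear_combination hBB
    simp only []
    linear_combination this
  · exfalso
    apply hnc
    have hsub : ({P0, P1, P2} : Set ℂ) ⊆ (AffineSubspace.perpBisector B B' : Set ℂ) := by
      intro x hx
      rcases hx with rfl | rfl | rfl <;>
        simpa [AffineSubspace.mem_perpBisector_iff_dist_eq] using
          (by first | exact key _ h0 | exact key _ h1 | exact key _ h2 : dist x B = dist x B')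
    rw [collinear_iff_rank_le_one]
    have hle : vectorSpan ℝ ({P0, P1, P2} : Set ℂ) ≤
        (AffineSubspace.perpBisector B B').direction := by
      rw [AffineSubspace.direction_eq_vectorSpan]
      exact vectorSpan_mono ℝ hsub
    have hfin : Module.finrank ℝ (AffineSubspace.perpBisector B B').direction = 1 := by
      rw [AffineSubspace.direction_perpBisector]
      have hv : B' -ᵥ B ≠ 0 := by
        simpa [sub_eq_zero] using fun h => hBB h.symm
      have h2 : Module.finrank ℝ (ℝ ∙ (B' -ᵥ B)) = 1 := finrank_span_singleton hv
      have := Submodule.finrank_add_finrank_orthogonal (K := ℝ ∙ (B' -ᵥ B))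
      rw [h2, Complex.finrank_real_complex] at this
      omega
    calc Module.rank ℝ (vectorSpan ℝ ({P0, P1, P2} : Set ℂ))
        ≤ Module.rank ℝ (AffineSubspace.perpBisector B B').direction :=
          Submodule.rank_mono hle
      _ = 1 := by
          rw [← Module.finrank_eq_rank, hfin]; norm_num
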